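/- Let a, b be odd integers with a ≥ 3, b ≥ 1, T the generalized Collatz map, and Ω a cycle of T with odd elements Ω₁ of cardinality K and even elements of cardinality L. Then 2^(K+L)/a^K = ∏_{n ∈ Ω₁} (1 + b/(an)). -/

import Mathlib

/-- For a cycle `Ω` of `T` with odd elements `Ω₁` (cardinality `K`) and
`L` even elements, `2^(K+L)/a^K = ∏_{n ∈ Ω₁} (1 + b/(a n))`. -/
theorem cycle_product_identity
    (a b : ℤ) (ha : Odd a) (hb : Odd b) (ha3 : 3 ≤ a) (hb1 : 1 ≤ b)
    (T : ℤ → ℤ) (hT : ∀ n, T n = if n % 2 = 0 then n / 2 else (a * n + b) / 2)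
    (Ω : Finset ℤ) (hpos : ∀ x ∈ Ω, 0 < x) (hcycle : Ω.image T = Ω)
    (Ω₁ : Finset ℤ) (hΩ₁ : Ω₁ = Ω.filter (fun x => Odd x))
    (K L : ℕ) (hK : K = Ω₁.card) (hL : L = Ω.card - K) :
    (2 : ℝ) ^ (K + L) / (a : ℝ) ^ K = ∏ n ∈ Ω₁, (1 + (b : ℝ) / (a * n)) := by
  classical
  set E := Ω.filter (fun x => ¬ Odd x) with hE
  have hsub : Ω₁ ⊆ Ω := hΩ₁ ▸ Finset.filter_subset _ _
  have hcard : Ω₁.card + E.card = Ω.card := by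
    rw [hΩ₁, hE]; exact Finset.card_filter_add_card_filter_not _
  have hKle : K ≤ Ω.card := by omega
  have hLE : L = E.card := by omega
  have ha0 : (0:ℝ) < (a:ℝ) := by exact_mod_cast lt_of_lt_of_le (by norm_num) ha3
  -- injectivity of T on Ω
  have hinj : Set.InjOn T Ω := by
    rw [← Finset.card_image_iff, hcycle]
  -- value of T on odd elements
  have hTodd : ∀ x : ℤ, Odd x → ((T x : ℝ)) = ((a:ℝ) * x + b) / 2 := by
    intro x hx
    have hx2 : x % 2 ≠ 0 := by
      rw [Int.odd_iff] at hx; omega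
    have hdvd : (2:ℤ) ∣ (a * x + b) := (Odd.add_odd (ha.mul hx) hb).two_dvd
    rw [hT, if_neg hx2, Int.cast_div hdvd (by norm_num)]
    push_cast; ring
  -- value of T on even elements
  have hTeven : ∀ x : ℤ, ¬ Odd x → ((T x : ℝ)) = (x:ℝ) / 2 := by
    intro x hx
    rw [Int.not_odd_iff] at hx
    have hdvd : (2:ℤ) ∣ x := by omega
    rw [hT, if_pos hx, Int.cast_div hdvd (by norm_num)]
    norm_num
  -- product over Ω is preserved by T
  have hprodT : ∏ x ∈ Ω, ((T x : ℝ)) = ∏ x ∈ Ω, (x:ℝ) := by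
    conv_rhs => rw [← hcycle]
    rw [Finset.prod_image (fun x hx y hy h => hinj hx hy h)]
  -- split both sides
  have hsplitL : ∏ x ∈ Ω, ((T x : ℝ))
      = ((∏ x ∈ Ω₁, ((a:ℝ) * x + b)) * ∏ x ∈ E, (x:ℝ)) / 2 ^ (K + L) := by
    rw [← Finset.prod_filter_mul_prod_filter_not Ω (fun x => Odd x) (fun x => ((T x : ℝ))),
      ← hΩ₁, ← hE]
    rw [Finset.prod_congr rfl (fun x hx => hTodd x (by rw [hΩ₁] at hx; exact (Finset.mem_filter.mp hx).2)),
      Finset.prod_congr rfl (fun x hx => hTeven x (by rw [hE] at hx; exact (Finset.mem_filter.mp hx).2))]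
    rw [Finset.prod_div_distrib, Finset.prod_div_distrib, Finset.prod_const, Finset.prod_const,
      ← hK, ← hLE]
    rw [pow_add]
    field_simp
  have hsplitR : ∏ x ∈ Ω, (x:ℝ) = (∏ x ∈ Ω₁, (x:ℝ)) * ∏ x ∈ E, (x:ℝ) := by
    rw [← Finset.prod_filter_mul_prod_filter_not Ω (fun x => Odd x) (fun x => (x:ℝ)), ← hΩ₁, ← hE]
  -- positivity of the partial products
  have hpos1 : (0:ℝ) < ∏ x ∈ Ω₁, (x:ℝ) :=
    Finset.prod_pos fun x hx => by exact_mod_cast hpos x (hsub hx)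
  have hpos2 : (0:ℝ) < ∏ x ∈ E, (x:ℝ) :=
    Finset.prod_pos fun x hx => by
      exact_mod_cast hpos x (Finset.filter_subset _ _ hx)
  -- key identity
  have key : ∏ x ∈ Ω₁, ((a:ℝ) * x + b) = 2 ^ (K + L) * ∏ x ∈ Ω₁, (x:ℝ) := by
    have h := hprodT
    rw [hsplitL, hsplitR] at h
    have h2 : (0:ℝ) < (2:ℝ) ^ (K + L) := by positivity
    field_simp at h
    exact h
  -- finish
  have hrhs : ∏ n ∈ Ω₁, (1 + (b : ℝ) / (a * n))
      = (∏ x ∈ Ω₁, ((a:ℝ) * x + b)) / ((a:ℝ) ^ K * ∏ x ∈ Ω₁, (x:ℝ)) := by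
    rw [eq_div_iff (by positivity)]
    rw [hK, ← Finset.prod_const (b := (a:ℝ)), ← Finset.prod_mul_distrib, ← Finset.prod_mul_distrib]
    refine Finset.prod_congr rfl fun x hx => ?_
    have hx0 : (0:ℝ) < (x:ℝ) := by exact_mod_cast hpos x (hsub hx)
    field_simp
  rw [hrhs, key]
  field_simp
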